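/- If α, β > 0 satisfy f_s(0,α) = f_d(0,α,β) ≥ 0, then max_{u∈[−1,1]} f_s(u,α) = max_{u∈[−1,1]} f_d(u,α,β) = f_s(0,α). -/

import Mathlib

noncomputable section

open Real Set

/-- A vector in Euclidean 3-space. -/
def v3 (x y z : ℝ) : EuclideanSpace ℝ (Fin 3) := WithLp.toLp 2 ![x, y, z]

/-- Quadratic Bernstein polynomials (parametrized on `[-1,1]`). -/
def bern (i : Fin 3) (u : ℝ) : ℝ :=
  (Nat.choose 2 (i : ℕ)) * ((1 + u) / 2) ^ (i : ℕ) * ((1 - u) / 2) ^ (2 - (i : ℕ))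

/-- Control points `ctrl a α β i j = b i j` of the tensor product quadratic Bézier patch:
`b₀₀ = (-a,-a,√(1-2a²))`, `b₂₀ = (a,-a,√(1-2a²))`, `b₀₂ = (-a,a,√(1-2a²))`,
`b₂₂ = (a,a,√(1-2a²))`, `b₁₀ = α(b₀₀+b₂₀)`, `b₀₁ = α(b₀₀+b₀₂)`, `b₂₁ = α(b₂₀+b₂₂)`,
`b₁₂ = α(b₀₂+b₂₂)`, `b₁₁ = β(0,0,1)`. The first index is the `u`-index. -/
def ctrl (a α β : ℝ) : Fin 3 → Fin 3 → EuclideanSpace ℝ (Fin 3) :=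
  ![![v3 (-a) (-a) (Real.sqrt (1 - 2*a^2)),
     α • (v3 (-a) (-a) (Real.sqrt (1 - 2*a^2)) + v3 (-a) a (Real.sqrt (1 - 2*a^2))),
     v3 (-a) a (Real.sqrt (1 - 2*a^2))],
    ![α • (v3 (-a) (-a) (Real.sqrt (1 - 2*a^2)) + v3 a (-a) (Real.sqrt (1 - 2*a^2))),
     β • v3 0 0 1,
     α • (v3 (-a) a (Real.sqrt (1 - 2*a^2)) + v3 a a (Real.sqrt (1 - 2*a^2)))],
    ![v3 a (-a) (Real.sqrt (1 - 2*a^2)),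
     α • (v3 a (-a) (Real.sqrt (1 - 2*a^2)) + v3 a a (Real.sqrt (1 - 2*a^2))),
     v3 a a (Real.sqrt (1 - 2*a^2))]]

/-- The tensor product quadratic Bézier patch
`p(u,v) = ∑ᵢ ∑ⱼ Bᵢ²(u) Bⱼ²(v) bᵢⱼ`. -/
def bez (a α β u v : ℝ) : EuclideanSpace ℝ (Fin 3) :=
  ∑ i : Fin 3, ∑ j : Fin 3, (bern i u * bern j v) • ctrl a α β i j

/-- The simplified radial error `f(u,v,α,β) = ‖p(u,v)‖² - 1`. -/
def f (a α β u v : ℝ) : ℝ := ‖bez a α β u v‖ ^ 2 - 1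

/-- `f_s(u,α) = f(u,-1,α,β)`; this does not depend on `β` (the control point `b₁₁`
does not contribute on the side `v = -1`), so we take `β = 0`. -/
def fs (a α u : ℝ) : ℝ := f a α 0 u (-1)

/-- `f_d(u,α,β) = f(u,u,α,β)`, the error along the diagonal. -/
def fd (a α β u : ℝ) : ℝ := f a α β u u

lemma f_eq (a α β u v : ℝ) :
    f a α β u v = (bez a α β u v 0)^2 + (bez a α β u v 1)^2 + (bez a α β u v 2)^2 - 1 := by
  have h : ‖bez a α β u v‖^2 = ∑ i : Fin 3, (bez a α β u v i)^2 := by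
    rw [EuclideanSpace.norm_eq, Real.sq_sqrt (by positivity)]
    simp [sq_abs]
  simp [f, h, Fin.sum_univ_three]

lemma bez_apply (a α β u v : ℝ) (k : Fin 3) :
    bez a α β u v k = ∑ i : Fin 3, ∑ j : Fin 3, (bern i u * bern j v) * ctrl a α β i j k := by
  simp [bez, Finset.sum_apply]

lemma fs_eq (a α u : ℝ) (h : 2*a^2 ≤ 1) :
    fs a α u = a^2*u^2 + (1-a^2)*((1/2+α)+(1/2-α)*u^2)^2 - 1 := by
  have hs : (Real.sqrt (1 - 2*a^2))^2 = 1 - 2*a^2 := Real.sq_sqrt (by linarith)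
  rw [fs, f_eq, bez_apply, bez_apply, bez_apply]
  simp only [Fin.sum_univ_three, ctrl, v3, bern]
  norm_num [Matrix.cons_val_zero, Matrix.cons_val_one, Matrix.head_cons, Fin.isValue, Matrix.cons_val_two, Matrix.tail_cons, Matrix.cons_val]
  ring_nf at hs ⊢
  linear_combination (((1/2+α)+(1/2-α)*u^2)^2) * hs

lemma fd_eq (a α β u : ℝ) (h : 2*a^2 ≤ 1) :
    fd a α β u = 2*a^2*u^2*((1/2+α)+(1/2-α)*u^2)^2 +
      (Real.sqrt (1 - 2*a^2)*((1+u^2)/2)^2 + 4*Real.sqrt (1 - 2*a^2)*α*((1+u^2)/2)*((1-u^2)/2)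
        + β*((1-u^2)/2)^2)^2 - 1 := by
  have hs : (Real.sqrt (1 - 2*a^2))^2 = 1 - 2*a^2 := Real.sq_sqrt (by linarith)
  rw [fd, f_eq, bez_apply, bez_apply, bez_apply]
  simp only [Fin.sum_univ_three, ctrl, v3, bern]
  norm_num [Matrix.cons_val_zero, Matrix.cons_val_one, Matrix.head_cons, Fin.isValue, Matrix.cons_val_two, Matrix.tail_cons, Matrix.cons_val]
  ring_nf

set_option maxHeartbeats 1000000 in
lemma core (s w α t : ℝ) (hs : 0 ≤ s) (hw : 0 < w) (hsw : s ≤ w)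
    (hrel : 2*w^2 = 1 + s^2) (hα : 0 < α) (hK : 1 ≤ w*(1/2+α))
    (ht0 : 0 ≤ t) (ht1 : t ≤ 1) :
    2*(w^2-s^2)*t*((1/2+α)+(1/2-α)*t)^2 +
      (s*((1+t)/2)^2 + 4*s*α*((1+t)/2)*((1-t)/2) + (4*(w*(1/2+α)) - s - 4*s*α)*((1-t)/2)^2)^2
      ≤ (w*(1/2+α))^2 := by
  have hs1 : s ≤ 1 := by nlinarith
  have hw1 : w ≤ 1 := by nlinarith
  have hg0 : 1 ≤ 1/2 + α := by nlinarith
  have hKs : s ≤ w*(1/2+α) := by nlinarith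
  have hK2 : 1 ≤ (w*(1/2+α))^2 := by nlinarith
  have key : (w*(1/2+α))^2 -
      (2*(w^2-s^2)*t*((1/2+α)+(1/2-α)*t)^2 +
      (s*((1+t)/2)^2 + 4*s*α*((1+t)/2)*((1-t)/2) + (4*(w*(1/2+α)) - s - 4*s*α)*((1-t)/2)^2)^2)
      = t*(16*(w-s)^2*((1-t)/2)^3*(1/2+α)^2 + t*((w*(1/2+α))^2-1)
          + 4*(w-s)*((1-t)/2)^2*(1/2+α)*t*(w*(1/2+α)-s)
          + 2*((1-t)/2)*s*t*(α-1/2)*((1-t)*(w*(1/2+α)-s)+2*t*s*(α-1/2)))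
        + (1-s^2)*t^2*(1-t)*(α-1/2)^2 := by
    linear_combination ((-3/4:ℝ)*t^2 + (-1/4:ℝ)*t^3 + (-1:ℝ)*α*t^2 + (1:ℝ)*α*t^3
      + (1:ℝ)*α^2*t^2 + (-1:ℝ)*α^2*t^3) * hrel
  have h1t : 0 ≤ 1 - t := by linarith
  have hδ : 0 ≤ w - s := by linarith
  have hg0' : (0:ℝ) ≤ 1/2 + α := by linarith
  have ha12 : 0 ≤ α - 1/2 := by linarith
  have hr : 0 ≤ (1-t)/2 := by linarith
  have T1 : 0 ≤ 16*(w-s)^2*((1-t)/2)^3*(1/2+α)^2 := by positivity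
  have T2 : 0 ≤ t*((w*(1/2+α))^2-1) := mul_nonneg ht0 (by linarith)
  have T3 : 0 ≤ 4*(w-s)*((1-t)/2)^2*(1/2+α)*t*(w*(1/2+α)-s) := by
    have : 0 ≤ w*(1/2+α)-s := by linarith
    positivity
  have T4 : 0 ≤ 2*((1-t)/2)*s*t*(α-1/2)*((1-t)*(w*(1/2+α)-s)+2*t*s*(α-1/2)) := by
    have h5 : 0 ≤ w*(1/2+α)-s := by linarith
    have h6 : 0 ≤ (1-t)*(w*(1/2+α)-s)+2*t*s*(α-1/2) := by
      have := mul_nonneg h1t h5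
      have := mul_nonneg (mul_nonneg ht0 hs) ha12
      linarith
    positivity
  have T5 : 0 ≤ (1-s^2)*t^2*(1-t)*(α-1/2)^2 := by
    have : 0 ≤ 1 - s^2 := by nlinarith
    positivity
  have hS : 0 ≤ t*(16*(w-s)^2*((1-t)/2)^3*(1/2+α)^2 + t*((w*(1/2+α))^2-1)
          + 4*(w-s)*((1-t)/2)^2*(1/2+α)*t*(w*(1/2+α)-s)
          + 2*((1-t)/2)*s*t*(α-1/2)*((1-t)*(w*(1/2+α)-s)+2*t*s*(α-1/2))) :=
    mul_nonneg ht0 (by linarith)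
  linarith [key, hS, T5]

set_option maxHeartbeats 1000000 in
/-- If `α, β > 0` satisfy `f_s(0,α) = f_d(0,α,β) ≥ 0`, then
`max_{[-1,1]} f_s(·,α) = max_{[-1,1]} f_d(·,α,β) = f_s(0,α)`. -/
theorem max_at_zero (a : ℝ) (ha : 0 < a) (ha' : a ≤ Real.sqrt 2 / 2)
    (α β : ℝ) (hα : 0 < α) (hβ : 0 < β)
    (heq : fs a α 0 = fd a α β 0) (hpos : 0 ≤ fs a α 0) :
    sSup ((fun u => fs a α u) '' Set.Icc (-1:ℝ) 1) = fs a α 0 ∧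
    sSup ((fun u => fd a α β u) '' Set.Icc (-1:ℝ) 1) = fs a α 0 := by
  have h2a : 2*a^2 ≤ 1 := by
    have h : a^2 ≤ (Real.sqrt 2 / 2)^2 := by
      apply pow_le_pow_left₀ ha.le ha' 2
    rw [div_pow, Real.sq_sqrt (by norm_num : (2:ℝ) ≥ 0)] at h
    linarith
  set s := Real.sqrt (1 - 2*a^2) with hsdef
  set w := Real.sqrt (1 - a^2) with hwdef
  have hs2 : s^2 = 1 - 2*a^2 := Real.sq_sqrt (by linarith)
  have hw2 : w^2 = 1 - a^2 := Real.sq_sqrt (by nlinarith)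
  have hs0 : 0 ≤ s := Real.sqrt_nonneg _
  have hw0 : 0 < w := Real.sqrt_pos.2 (by nlinarith)
  have hsw : s ≤ w := Real.sqrt_le_sqrt (by nlinarith)
  have hrel : 2*w^2 = 1 + s^2 := by rw [hs2, hw2]; ring
  have fs0val : fs a α 0 = (w*(1/2+α))^2 - 1 := by
    rw [fs_eq a α 0 h2a]; rw [mul_pow, hw2]; ring
  have fd0val : fd a α β 0 = (s/4 + s*α + β/4)^2 - 1 := by
    rw [fd_eq a α β 0 h2a, ← hsdef]; ring
  -- from heq derive β = 4*(w*(1/2+α)) - s - 4*s*α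
  have hKpos : 0 < w*(1/2+α) := by positivity
  have hXpos : 0 < s/4 + s*α + β/4 := by positivity
  have hsq : (w*(1/2+α))^2 = (s/4 + s*α + β/4)^2 := by
    rw [fs0val, fd0val] at heq; linarith
  have hKX : w*(1/2+α) = s/4 + s*α + β/4 := by
    have h0 : (w*(1/2+α) - (s/4 + s*α + β/4)) * (w*(1/2+α) + (s/4 + s*α + β/4)) = 0 := by
      linear_combination hsq
    rcases mul_eq_zero.mp h0 with h | h
    · linarith
    · linarith
  have hβval : β = 4*(w*(1/2+α)) - s - 4*s*α := by linarith
  have hK1 : 1 ≤ w*(1/2+α) := by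
    rw [fs0val] at hpos; nlinarith
  -- bounds
  have hfs_le : ∀ u ∈ Set.Icc (-1:ℝ) 1, fs a α u ≤ fs a α 0 := by
    intro u hu
    rw [fs_eq a α u h2a, fs0val]
    have ht0 : 0 ≤ u^2 := sq_nonneg u
    have ht1 : u^2 ≤ 1 := by
      rcases hu with ⟨h1, h2⟩; nlinarith
    have hfs0 : 0 ≤ (w*(1/2+α))^2 - 1 := by linarith [sq_nonneg (w*(1/2+α))]; 
    have hw2' : (1:ℝ) - a^2 = w^2 := hw2.symm
    rw [hw2']
    nlinarith [mul_nonneg ht0 hfs0,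
      mul_nonneg (mul_nonneg (sq_nonneg w) (sq_nonneg (1/2-α))) (mul_nonneg ht0 (by linarith : (0:ℝ) ≤ 1 - u^2)),
      hs2, hrel]
  have hfd_le : ∀ u ∈ Set.Icc (-1:ℝ) 1, fd a α β u ≤ fs a α 0 := by
    intro u hu
    rw [fd_eq a α β u h2a, ← hsdef, fs0val, hβval]
    have ht0 : 0 ≤ u^2 := sq_nonneg u
    have ht1 : u^2 ≤ 1 := by rcases hu with ⟨h1, h2⟩; nlinarith
    have ha2 : a^2 = w^2 - s^2 := by rw [hs2, hw2]; ring
    have := core s w α (u^2) hs0 hw0 hsw hrel hα hK1 ht0 ht1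
    rw [ha2]
    linarith
  have h0mem : (0:ℝ) ∈ Set.Icc (-1:ℝ) 1 := by norm_num
  constructor
  · exact IsGreatest.csSup_eq ⟨⟨0, h0mem, rfl⟩, by rintro x ⟨u, hu, rfl⟩; exact hfs_le u hu⟩
  · exact IsGreatest.csSup_eq ⟨⟨0, h0mem, heq.symm⟩, by rintro x ⟨u, hu, rfl⟩; exact hfd_le u hu⟩

end
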